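/- Let (ξ_j)_{j≥0} be an i.i.d. sequence of standard Gaussian N(0,1) random variables. For every α > 0 and q > 0 there exists a finite constant C, depending only on α and q, such that for every ℕ-valued random variable N defined on the same probability space and every k ∈ ℕ, E|ξ_{N∧k}|^q ≤ E[(N∧k)^α] + C. -/

import Mathlib

open MeasureTheory Filter ProbabilityTheory Real

lemma aux_rpow_le (t : ℝ) (ht : 0 ≤ t) (x : ℝ) :
    |x| ^ t ≤ Real.exp (t ^ 2) * Real.exp (x ^ 2 / 4) := by
  rcases le_or_gt (|x|) 1 with h | h
  · calc |x| ^ t ≤ 1 := Real.rpow_le_one (abs_nonneg x) h ht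
    _ ≤ _ := one_le_mul_of_one_le_of_one_le (Real.one_le_exp (sq_nonneg _))
        (Real.one_le_exp (by positivity))
  · have hx : 0 < |x| := lt_trans one_pos h
    rw [Real.rpow_def_of_pos hx, ← Real.exp_add]
    apply Real.exp_le_exp.mpr
    have hlog : Real.log |x| ≤ |x| := (Real.log_le_sub_one_of_pos hx).trans (by linarith)
    have h1 : t * Real.log |x| ≤ t * |x| := mul_le_mul_of_nonneg_left hlog ht
    nlinarith [sq_nonneg (t - |x| / 2), sq_abs x]

lemma aux_integrable_gauss {t : ℝ} (ht : 0 ≤ t) :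
    Integrable (fun x => |x| ^ t) (gaussianReal 0 1) := by
  rw [gaussianReal_of_var_ne_zero 0 one_ne_zero,
    integrable_withDensity_iff (measurable_gaussianPDF 0 1)
      (ae_of_all _ fun x => ENNReal.ofReal_lt_top)]
  have hpdf : ∀ x : ℝ, (gaussianPDF 0 1 x).toReal = gaussianPDFReal 0 1 x := fun x =>
    ENNReal.toReal_ofReal (gaussianPDFReal_nonneg _ _ _)
  have hint : Integrable (fun x : ℝ =>
      (Real.sqrt (2 * π))⁻¹ * Real.exp (t ^ 2) * Real.exp (-(1/4 : ℝ) * x ^ 2)) := by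
    exact (integrable_exp_neg_mul_sq (by norm_num)).const_mul _
  refine hint.mono' ?_ (ae_of_all _ fun x => ?_)
  · exact ((measurable_id.abs.pow_const t).mul
      (measurable_gaussianPDFReal 0 1)).aestronglyMeasurable.congr
      (ae_of_all _ fun x => by simp [hpdf x])
  · rw [hpdf]
    have h0 : 0 ≤ |x| ^ t := Real.rpow_nonneg (abs_nonneg x) t
    have hpos : 0 ≤ gaussianPDFReal 0 1 x := gaussianPDFReal_nonneg _ _ _
    rw [Real.norm_eq_abs, abs_of_nonneg (mul_nonneg h0 hpos)]
    have hval : gaussianPDFReal 0 1 x = (Real.sqrt (2 * π))⁻¹ * Real.exp (-x ^ 2 / 2) := by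
      simp [gaussianPDFReal]
    rw [hval]
    calc |x| ^ t * ((Real.sqrt (2 * π))⁻¹ * Real.exp (-x ^ 2 / 2))
        ≤ (Real.exp (t ^ 2) * Real.exp (x ^ 2 / 4)) *
          ((Real.sqrt (2 * π))⁻¹ * Real.exp (-x ^ 2 / 2)) := by
          apply mul_le_mul_of_nonneg_right (aux_rpow_le t ht x) (by positivity)
      _ = (Real.sqrt (2 * π))⁻¹ * Real.exp (t ^ 2) * Real.exp (-(1/4 : ℝ) * x ^ 2) := by
          have he : Real.exp (t ^ 2) * Real.exp (x ^ 2 / 4) * Real.exp (-x ^ 2 / 2)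
              = Real.exp (t ^ 2) * Real.exp (-(1/4 : ℝ) * x ^ 2) := by
            rw [← Real.exp_add, ← Real.exp_add, ← Real.exp_add]; ring_nf
          linear_combination (Real.sqrt (2 * π))⁻¹ * he

set_option maxHeartbeats 1000000 in
/-- For an i.i.d. standard Gaussian sequence `(ξ_j)`, for every `α > 0` and `q > 0` there is a
constant `C` (depending only on `α` and `q`) such that for every `ℕ`-valued random variable `N`
and every `k`, `E|ξ_{N∧k}|^q ≤ E[(N∧k)^α] + C`. -/
theorem stmt5 {Ω : Type*} [MeasurableSpace Ω] (P : Measure Ω) [IsProbabilityMeasure P]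
    (ξ : ℕ → Ω → ℝ) (hmeas : ∀ j, Measurable (ξ j))
    (hlaw : ∀ j, P.map (ξ j) = gaussianReal 0 1)
    (hindep : iIndepFun ξ P)
    (α q : ℝ) (hα : 0 < α) (hq : 0 < q) :
    ∃ C : ℝ, ∀ N : Ω → ℕ, Measurable N → ∀ k : ℕ,
      ∫ ω, |ξ (min (N ω) k) ω| ^ q ∂P ≤ (∫ ω, ((min (N ω) k : ℕ) : ℝ) ^ α ∂P) + C := by
  classical
  set μ := gaussianReal 0 1 with hμ
  set s : ℝ := q + 2 * q / α with hs
  have hs0 : 0 ≤ s := by positivity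
  have hIq : ∀ i, Integrable (fun ω => |ξ i ω| ^ q) P := by
    intro i
    have h1 : Integrable (fun x : ℝ => |x| ^ q) (P.map (ξ i)) := by
      rw [hlaw i]; exact aux_integrable_gauss hq.le
    exact (integrable_map_measure (measurable_id.abs.pow_const q).aestronglyMeasurable
      (hmeas i).aemeasurable).mp h1
  set G : ℕ → ℝ → ℝ := fun i x => if ((i : ℝ)) ^ α < |x| ^ q then |x| ^ q else 0 with hG
  have hGmeas : ∀ i, Measurable (G i) := fun i =>
    Measurable.ite (measurableSet_lt measurable_const (measurable_id.abs.pow_const q))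
      (measurable_id.abs.pow_const q) measurable_const
  have hGnonneg : ∀ i x, 0 ≤ G i x := by
    intro i x
    by_cases h : ((i : ℝ)) ^ α < |x| ^ q <;>
      simp [hG, h, Real.rpow_nonneg (abs_nonneg x)]
  have hGle : ∀ i x, G i x ≤ |x| ^ q := by
    intro i x
    by_cases h : ((i : ℝ)) ^ α < |x| ^ q <;>
      simp [hG, h, Real.rpow_nonneg (abs_nonneg x)]
  have hGint : ∀ i, Integrable (G i) μ := by
    intro i
    refine (aux_integrable_gauss hq.le).mono' (hGmeas i).aestronglyMeasurable
      (ae_of_all _ fun x => ?_)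
    rw [Real.norm_eq_abs, abs_of_nonneg (hGnonneg i x)]
    exact hGle i x
  set B : ℕ → ℝ := fun i => ∫ x, G i x ∂μ with hB
  have hBnonneg : ∀ i, 0 ≤ B i := fun i => integral_nonneg (hGnonneg i)
  set Ms : ℝ := ∫ x, |x| ^ s ∂μ with hMsdef
  have hMs : Integrable (fun x : ℝ => |x| ^ s) μ := aux_integrable_gauss hs0
  have hGkey : ∀ (i : ℕ), 1 ≤ i → ∀ x : ℝ, G i x ≤ |x| ^ s / ((i : ℝ)) ^ 2 := by
    intro i hi x
    have hipos : (0 : ℝ) < (i : ℝ) := by exact_mod_cast hi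
    by_cases h : ((i : ℝ)) ^ α < |x| ^ q
    · have hipow : (0 : ℝ) < ((i : ℝ)) ^ α := Real.rpow_pos_of_pos hipos α
      have hxq : (0 : ℝ) < |x| ^ q := lt_trans hipow h
      have hxpos : (0 : ℝ) < |x| := by
        by_contra hc
        push_neg at hc
        have hx0 : |x| = 0 := le_antisymm hc (abs_nonneg x)
        rw [hx0, Real.zero_rpow hq.ne'] at hxq
        exact lt_irrefl 0 hxq
      have h1 : ((i : ℝ) ^ α) ^ (2 / α) ≤ (|x| ^ q) ^ (2 / α) :=
        Real.rpow_le_rpow hipow.le h.le (by positivity)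
      have h2 : ((i : ℝ) ^ α) ^ (2 / α) = (i : ℝ) ^ 2 := by
        rw [← Real.rpow_natCast ((i : ℝ)) 2, ← Real.rpow_mul hipos.le]
        congr 1
        field_simp
        norm_num
      have h3 : (|x| ^ q) ^ (2 / α) = |x| ^ (2 * q / α) := by
        rw [← Real.rpow_mul (abs_nonneg x)]
        congr 1
        field_simp
      have h4 : |x| ^ s = |x| ^ q * |x| ^ (2 * q / α) := by
        rw [hs, Real.rpow_add hxpos]
      simp only [hG, if_pos h]
      rw [le_div_iff₀ (by positivity : (0 : ℝ) < ((i : ℝ)) ^ 2)]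
      calc |x| ^ q * (i : ℝ) ^ 2 ≤ |x| ^ q * (|x| ^ q) ^ (2 / α) := by
            apply mul_le_mul_of_nonneg_left _ hxq.le
            rw [← h2]; exact h1
        _ = |x| ^ s := by rw [h3, ← h4]
    · simp only [hG, if_neg h]
      positivity
  have hBbound : ∀ (i : ℕ), 1 ≤ i → B i ≤ Ms / ((i : ℝ)) ^ 2 := by
    intro i hi
    have := integral_mono (hGint i) (hMs.div_const _) (hGkey i hi)
    rwa [integral_div] at this
  have hsum2 : Summable (fun i : ℕ => Ms / ((i : ℝ)) ^ 2) := by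
    have h := (Real.summable_one_div_nat_pow (p := 2)).mpr one_lt_two
    exact (h.mul_left Ms).congr (fun n => by ring)
  have hsummB : Summable B := by
    rw [← summable_nat_add_iff 1]
    exact Summable.of_nonneg_of_le (fun n => hBnonneg _)
      (fun n => hBbound (n + 1) (by omega)) ((summable_nat_add_iff 1).mpr hsum2)
  refine ⟨∑' i, B i, fun N hN k => ?_⟩
  -- integrability of pieces
  have hg : ∀ i, Integrable (fun ω => G i (ξ i ω)) P := by
    intro i
    refine (integrable_map_measure (hGmeas i).aestronglyMeasurable
      (hmeas i).aemeasurable).mp ?_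
    rw [hlaw i]; exact hGint i
  have hgB : ∀ i, ∫ ω, G i (ξ i ω) ∂P = B i := by
    intro i
    have h1 : AEStronglyMeasurable (G i) (P.map (ξ i)) := by
      rw [hlaw i]; exact (hGmeas i).aestronglyMeasurable
    have h2 := integral_map (hmeas i).aemeasurable h1
    rw [hlaw i] at h2
    exact h2.symm
  have hMα : Integrable (fun ω => ((min (N ω) k : ℕ) : ℝ) ^ α) P := by
    have hm : Measurable (fun ω => ((min (N ω) k : ℕ) : ℝ) ^ α) :=
      (measurable_from_top (f := fun n : ℕ => ((n : ℝ)) ^ α)).comp (hN.min measurable_const)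
    refine (integrable_const (((k : ℕ) : ℝ) ^ α)).mono' hm.aestronglyMeasurable
      (ae_of_all _ fun ω => ?_)
    rw [Real.norm_eq_abs, abs_of_nonneg (Real.rpow_nonneg (Nat.cast_nonneg _) α)]
    exact Real.rpow_le_rpow (Nat.cast_nonneg _)
      (by exact_mod_cast min_le_right (N ω) k) hα.le
  have hRHSint : Integrable (fun ω =>
      ((min (N ω) k : ℕ) : ℝ) ^ α + ∑ i ∈ Finset.range (k + 1), G i (ξ i ω)) P :=
    hMα.add (integrable_finset_sum _ fun i _ => hg i)
  have hpt : ∀ ω, |ξ (min (N ω) k) ω| ^ q ≤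
      ((min (N ω) k : ℕ) : ℝ) ^ α + ∑ i ∈ Finset.range (k + 1), G i (ξ i ω) := by
    intro ω
    have hsumnn : (0 : ℝ) ≤ ∑ i ∈ Finset.range (k + 1), G i (ξ i ω) :=
      Finset.sum_nonneg fun i _ => hGnonneg i _
    by_cases hc : ((min (N ω) k : ℕ) : ℝ) ^ α < |ξ (min (N ω) k) ω| ^ q
    · have hmem : min (N ω) k ∈ Finset.range (k + 1) := by
        simp [Nat.lt_succ_iff, min_le_right]
      have heq : G (min (N ω) k) (ξ (min (N ω) k) ω) = |ξ (min (N ω) k) ω| ^ q := if_pos hc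
      have hle : G (min (N ω) k) (ξ (min (N ω) k) ω) ≤
          ∑ i ∈ Finset.range (k + 1), G i (ξ i ω) :=
        Finset.single_le_sum (fun i _ => hGnonneg i (ξ i ω)) hmem
      have hnn : (0 : ℝ) ≤ ((min (N ω) k : ℕ) : ℝ) ^ α :=
        Real.rpow_nonneg (Nat.cast_nonneg _) α
      linarith [heq ▸ hle]
    · push_neg at hc
      linarith
  calc ∫ ω, |ξ (min (N ω) k) ω| ^ q ∂P
      ≤ ∫ ω, (((min (N ω) k : ℕ) : ℝ) ^ α
          + ∑ i ∈ Finset.range (k + 1), G i (ξ i ω)) ∂P :=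
        integral_mono_of_nonneg
          (ae_of_all _ fun ω => Real.rpow_nonneg (abs_nonneg _) q)
          hRHSint (ae_of_all _ hpt)
    _ = (∫ ω, ((min (N ω) k : ℕ) : ℝ) ^ α ∂P) + ∑ i ∈ Finset.range (k + 1), B i := by
        rw [integral_add hMα (integrable_finset_sum _ fun i _ => hg i),
          integral_finset_sum _ fun i _ => hg i]
        congr 1
        exact Finset.sum_congr rfl fun i _ => hgB i
    _ ≤ (∫ ω, ((min (N ω) k : ℕ) : ℝ) ^ α ∂P) + ∑' i, B i := by
        gcongr
        exact Summable.sum_le_tsum _ (fun i _ => hBnonneg i) hsummB
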